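/- Optimal choice of per-class margins: let K ≥ 1, let α_1,...,α_K > 0, and let c̄ > 0. Define γ*_y = c̄·K·α_y^{1/3} / (Σ_{k=1}^K α_k^{1/3}) for each y ∈ {1,...,K}. Then γ* satisfies the constraint Σ_{k=1}^K γ*_k = c̄·K, and for every γ = (γ_1,...,γ_K) with all γ_k > 0 and Σ_{k=1}^K γ_k = c̄·K, one has Σ_{k=1}^K α_k/γ_k² ≥ Σ_{k=1}^K α_k/(γ*_k)² = (Σ_{k=1}^K α_k^{1/3})³/(c̄·K)². -/

import Mathlib

/-- The optimal per-class margins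
`γ*_y = c̄·K·α_y^{1/3} / (Σ_k α_k^{1/3})`. -/
noncomputable def gammaStar {K : ℕ} (c : ℝ) (α : Fin K → ℝ) (y : Fin K) : ℝ :=
  c * K * α y ^ ((1 : ℝ) / 3) / ∑ k, α k ^ ((1 : ℝ) / 3)

/-- **Optimal choice of per-class margins.** For `K ≥ 1`, positive `α_1,…,α_K` and
`c̄ > 0`, the margins `γ*_y = c̄·K·α_y^{1/3}/(Σ_k α_k^{1/3})` satisfy the budget
constraint `Σ_k γ*_k = c̄·K`, minimize the complexity term `Σ_k α_k/γ_k²` among all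
positive margins with the same budget, and achieve the value
`(Σ_k α_k^{1/3})³/(c̄·K)²`. -/
theorem gammaStar_optimal (K : ℕ) (hK : 1 ≤ K) (α : Fin K → ℝ) (hα : ∀ k, 0 < α k)
    (c : ℝ) (hc : 0 < c) :
    (∑ k, gammaStar c α k = c * K) ∧
      (∀ γ : Fin K → ℝ, (∀ k, 0 < γ k) → (∑ k, γ k = c * K) →
        ∑ k, α k / gammaStar c α k ^ 2 ≤ ∑ k, α k / γ k ^ 2) ∧
      ∑ k, α k / gammaStar c α k ^ 2 =
        (∑ k, α k ^ ((1 : ℝ) / 3)) ^ 3 / (c * K) ^ 2 := by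
  haveI : Nonempty (Fin K) := Fin.pos_iff_nonempty.mp (by omega)
  have hS : 0 < ∑ k, α k ^ ((1 : ℝ) / 3) :=
    Finset.sum_pos (fun k _ => Real.rpow_pos_of_pos (hα k) _) Finset.univ_nonempty
  have hK' : (0 : ℝ) < K := by exact_mod_cast Nat.pos_of_ne_zero (by omega)
  have hcK : 0 < c * K := mul_pos hc hK'
  -- the budget constraint
  have h1 : ∑ k, gammaStar c α k = c * K := by
    unfold gammaStar
    rw [← Finset.sum_div, ← Finset.mul_sum, mul_div_assoc, div_self hS.ne', mul_one]
  -- the achieved value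
  have hval : ∀ k, α k / gammaStar c α k ^ 2 =
      α k ^ ((1 : ℝ) / 3) * (∑ j, α j ^ ((1 : ℝ) / 3)) ^ 2 / (c * K) ^ 2 := by
    intro k
    have ht : 0 < α k ^ ((1 : ℝ) / 3) := Real.rpow_pos_of_pos (hα k) _
    have ht3 : (α k ^ ((1 : ℝ) / 3)) ^ (3 : ℕ) = α k := by
      rw [← Real.rpow_natCast (α k ^ ((1:ℝ)/3)) 3, ← Real.rpow_mul (hα k).le]
      norm_num
    unfold gammaStar
    rw [div_pow, div_div_eq_mul_div]
    rw [div_eq_div_iff (by positivity) (by positivity)]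
    linear_combination (-(∑ j, α j ^ ((1:ℝ)/3)) ^ 2 * (c*(K:ℝ))^2) * ht3
  have h3 : ∑ k, α k / gammaStar c α k ^ 2 =
      (∑ k, α k ^ ((1 : ℝ) / 3)) ^ 3 / (c * K) ^ 2 := by
    simp only [hval]
    rw [← Finset.sum_div, ← Finset.sum_mul]
    ring_nf
  refine ⟨h1, ?_, h3⟩
  intro γ hγ hsum
  rw [h3]
  -- Hölder's inequality with exponents 3 and 3/2
  have hpq : Real.HolderConjugate 3 (3/2) := (Real.holderConjugate_iff_eq_conjExponent (by norm_num)).mpr (by norm_num)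
  have hT : 0 ≤ ∑ k, α k / γ k ^ 2 :=
    Finset.sum_nonneg fun k _ => div_nonneg (hα k).le (sq_nonneg _)
  have holder := Real.inner_le_Lp_mul_Lq_of_nonneg (s := Finset.univ)
      (f := fun k => (α k / γ k ^ 2) ^ ((1 : ℝ) / 3))
      (g := fun k => γ k ^ ((2 : ℝ) / 3)) hpq
      (fun k _ => Real.rpow_nonneg (div_nonneg (hα k).le (sq_nonneg _)) _)
      (fun k _ => Real.rpow_nonneg (hγ k).le _)
  have e1 : ∀ k : Fin K, (α k / γ k ^ 2) ^ ((1 : ℝ) / 3) * γ k ^ ((2 : ℝ) / 3)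
      = α k ^ ((1 : ℝ) / 3) := by
    intro k
    have hg2 : (γ k ^ (2 : ℕ) : ℝ) = γ k ^ ((2 : ℝ)) := by
      rw [← Real.rpow_natCast (γ k) 2]; norm_num
    rw [Real.div_rpow (hα k).le (sq_nonneg _), hg2, ← Real.rpow_mul (hγ k).le]
    norm_num
    rw [div_mul_cancel₀]
    exact (Real.rpow_pos_of_pos (hγ k) _).ne'
  have e2 : ∀ k : Fin K, ((α k / γ k ^ 2) ^ ((1 : ℝ) / 3)) ^ (3 : ℝ) = α k / γ k ^ 2 := by
    intro k
    rw [← Real.rpow_mul (div_nonneg (hα k).le (sq_nonneg _))]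
    norm_num
  have e3 : ∀ k : Fin K, (γ k ^ ((2 : ℝ) / 3)) ^ ((3 : ℝ)/2) = γ k := by
    intro k
    rw [← Real.rpow_mul (hγ k).le]
    norm_num
  simp only [e1, e2, e3] at holder
  rw [hsum] at holder
  -- cube both sides
  have hcube := pow_le_pow_left₀ hS.le holder 3
  have hrw : ((∑ k, α k / γ k ^ 2) ^ ((1:ℝ)/3) * (c * K) ^ ((1:ℝ)/(3/2))) ^ (3 : ℕ)
      = (∑ k, α k / γ k ^ 2) * (c * K) ^ 2 := by
    rw [mul_pow, ← Real.rpow_natCast ((∑ k, α k / γ k ^ 2) ^ ((1:ℝ)/3)) 3,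
      ← Real.rpow_natCast ((c * K) ^ ((1:ℝ)/(3/2))) 3,
      ← Real.rpow_mul hT, ← Real.rpow_mul hcK.le]
    norm_num
  rw [hrw] at hcube
  rw [div_le_iff₀ (by positivity)]
  exact hcube
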